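/- For integers 1 ≤ k < n, the concatenation map (χ, ω') ↦ χ ⊕ ω' := [χ_0, χ_1, …, χ_k, χ_k + ω'_1, …, χ_k + ω'_{n−k}] is a bijection from (the set of k-step irreducible bridges) × Υ_{n−k} onto {ω ∈ Υ_n : s(ω) = k}. In particular #{ω ∈ Υ_n : s(ω) = k} = λ_k · υ_{n−k}, and hence the uniform measure μ_n on Υ_n satisfies μ_n{s(ω) = k} = λ_k υ_{n−k}/υ_n. -/
import Mathlib


/-- An `n`-step self-avoiding walk in `ℤ^d`, given by its `n+1` vertices:
consecutive vertices are nearest neighbors, and all vertices are distinct. -/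
def IsSAW (d n : ℕ) (ω : Fin (n + 1) → Fin d → ℤ) : Prop :=
  (∀ i : Fin n, (∑ k : Fin d, |ω i.succ k - ω i.castSucc k|) = 1) ∧ Function.Injective ω

/-- The projection `π₁` onto the first coordinate. -/
def pi1 {d : ℕ} (x : Fin d → ℤ) : ℤ := if h : 0 < d then x ⟨0, h⟩ else 0

/-- `Υ_n`: the set of `n`-step self-avoiding walks in `ℤ^d` starting at `0` with
`π₁ ω_j > 0` for `1 ≤ j ≤ n`. -/
def Upsilon (d n : ℕ) : Set (Fin (n + 1) → Fin d → ℤ) :=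
  {ω | IsSAW d n ω ∧ ω 0 = 0 ∧ ∀ j : Fin (n + 1), 1 ≤ j.val → 0 < pi1 (ω j)}

/-- `υ_n`, the number of walks in `Υ_n`. -/
noncomputable def upsilonCount (d n : ℕ) : ℕ := Set.ncard (Upsilon d n)

/-- `j` is a renewal time of the `n`-step walk `ω`: `1 ≤ j ≤ n-1` and
`π₁ ω_k ≤ π₁ ω_j < π₁ ω_m` whenever `0 ≤ k ≤ j < m ≤ n`. -/
def HasRenewalAt {d n : ℕ} (ω : Fin (n + 1) → Fin d → ℤ) (j : ℕ) : Prop :=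
  1 ≤ j ∧ ∃ hj : j < n, ∀ k m : Fin (n + 1), k.val ≤ j → j < m.val →
    pi1 (ω k) ≤ pi1 (ω ⟨j, Nat.lt_succ_of_lt hj⟩) ∧
      pi1 (ω ⟨j, Nat.lt_succ_of_lt hj⟩) < pi1 (ω m)

/-- `s(ω) = k`: `k` is the least renewal time of `ω`. -/
def LeastRenewal {d n : ℕ} (ω : Fin (n + 1) → Fin d → ℤ) (k : ℕ) : Prop :=
  HasRenewalAt ω k ∧ ∀ j < k, ¬ HasRenewalAt ω j

/-- A bridge: a walk in `Υ_n` with `π₁ ω_j ≤ π₁ ω_n` for all `0 ≤ j ≤ n`. -/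
def IsBridge (d n : ℕ) (ω : Fin (n + 1) → Fin d → ℤ) : Prop :=
  ω ∈ Upsilon d n ∧ ∀ j : Fin (n + 1), pi1 (ω j) ≤ pi1 (ω (Fin.last n))

/-- An irreducible bridge: a bridge with no renewal time. -/
def IsIrrBridge (d n : ℕ) (ω : Fin (n + 1) → Fin d → ℤ) : Prop :=
  IsBridge d n ω ∧ ∀ j : ℕ, ¬ HasRenewalAt ω j

/-- `λ_k`, the number of `k`-step irreducible bridges. -/
noncomputable def lambdaCount (d k : ℕ) : ℕ :=
  Set.ncard {ω : Fin (k + 1) → Fin d → ℤ | IsIrrBridge d k ω}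

/-- Concatenation `χ ⊕ ω'` of a `k`-step walk `χ` and an `(m)`-step walk `ω'`
starting at `0`: follow `χ`, then the translate of `ω'` by `χ_k`. -/
def concatW {d k m : ℕ} (χ : Fin (k + 1) → Fin d → ℤ) (ω' : Fin (m + 1) → Fin d → ℤ) :
    Fin (k + m + 1) → Fin d → ℤ :=
  fun i =>
    if h : i.val ≤ k then χ ⟨i.val, by omega⟩
    else χ (Fin.last k) + ω' ⟨i.val - k, by have := i.isLt; omega⟩

/-! ### Auxiliary lemmas -/

lemma pi1_add {d : ℕ} (hd : 0 < d) (x y : Fin d → ℤ) : pi1 (x + y) = pi1 x + pi1 y := by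
  simp [pi1, hd]

lemma pi1_sub {d : ℕ} (hd : 0 < d) (x y : Fin d → ℤ) : pi1 (x - y) = pi1 x - pi1 y := by
  simp [pi1, hd]

lemma saw_step {d n : ℕ} {ω : Fin (n + 1) → Fin d → ℤ} (h : IsSAW d n ω)
    (i : ℕ) (hi : i < n) :
    (∑ c : Fin d, |ω ⟨i + 1, by omega⟩ c - ω ⟨i, by omega⟩ c|) = 1 := by
  have e1 : (⟨i, hi⟩ : Fin n).succ = ⟨i + 1, by omega⟩ := rfl
  have e2 : (⟨i, hi⟩ : Fin n).castSucc = ⟨i, by omega⟩ := rfl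
  have h1 := h.1 ⟨i, hi⟩
  rw [e1, e2] at h1
  exact h1

lemma concatW_le {d k m : ℕ} (χ : Fin (k + 1) → Fin d → ℤ) (ω' : Fin (m + 1) → Fin d → ℤ)
    {i : Fin (k + m + 1)} (h : i.val ≤ k) :
    concatW χ ω' i = χ ⟨i.val, by omega⟩ :=
  dif_pos h

lemma concatW_ge {d k m : ℕ} (χ : Fin (k + 1) → Fin d → ℤ) {ω' : Fin (m + 1) → Fin d → ℤ}
    (h0 : ω' 0 = 0) {i : Fin (k + m + 1)} (h : k ≤ i.val) :
    concatW χ ω' i = χ (Fin.last k) + ω' ⟨i.val - k, by have := i.isLt; omega⟩ := by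
  rcases lt_or_eq_of_le h with h' | h'
  · exact dif_neg (by omega)
  · rw [concatW_le χ ω' (le_of_eq h'.symm)]
    have e0 : (⟨i.val - k, by have := i.isLt; omega⟩ : Fin (m + 1)) = 0 := by
      apply Fin.ext; simp only [Fin.val_zero]; omega
    have el : (⟨i.val, by omega⟩ : Fin (k + 1)) = Fin.last k := by
      apply Fin.ext; simp only [Fin.val_last]; omega
    rw [e0, h0, el, add_zero]

/-- The first `k` steps of a `(k+m)`-step walk. -/
def leftPart {d k m : ℕ} (ω : Fin (k + m + 1) → Fin d → ℤ) : Fin (k + 1) → Fin d → ℤ :=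
  fun i => ω ⟨i.val, by have := i.isLt; omega⟩

/-- The last `m` steps of a `(k+m)`-step walk, translated to start at `0`. -/
def rightPart {d k m : ℕ} (ω : Fin (k + m + 1) → Fin d → ℤ) : Fin (m + 1) → Fin d → ℤ :=
  fun i => ω ⟨k + i.val, by have := i.isLt; omega⟩ - ω ⟨k, by omega⟩

lemma concat_mem {d k m : ℕ} (hd : 0 < d) (hk : 1 ≤ k) (hm : 1 ≤ m)
    {χ : Fin (k + 1) → Fin d → ℤ} {ω' : Fin (m + 1) → Fin d → ℤ}
    (hχ : IsIrrBridge d k χ) (hω' : ω' ∈ Upsilon d m) :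
    concatW χ ω' ∈ Upsilon d (k + m) ∧ LeastRenewal (concatW χ ω') k := by
  obtain ⟨⟨⟨hχsaw, hχ0, hχpos⟩, hχbr⟩, hχirr⟩ := hχ
  obtain ⟨hωsaw, hω0, hωpos⟩ := hω'
  set ω : Fin (k + m + 1) → Fin d → ℤ := concatW χ ω' with hωdef
  have hb : 0 < pi1 (χ (Fin.last k)) := hχpos (Fin.last k) (by simp only [Fin.val_last]; omega)
  have hcl : ∀ (i : Fin (k + m + 1)) (h : i.val ≤ k), ω i = χ ⟨i.val, by omega⟩ :=
    fun i h => concatW_le χ ω' h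
  have hcg : ∀ (i : Fin (k + m + 1)) (h : k ≤ i.val),
      ω i = χ (Fin.last k) + ω' ⟨i.val - k, by have := i.isLt; omega⟩ :=
    fun i h => concatW_ge χ hω0 h
  have hpos2 : ∀ (i : Fin (k + m + 1)), k < i.val → pi1 (χ (Fin.last k)) < pi1 (ω i) := by
    intro i h
    rw [hcg i (le_of_lt h), pi1_add hd]
    have hp := hωpos ⟨i.val - k, by have := i.isLt; omega⟩ (by show 1 ≤ i.val - k; omega)
    linarith
  have hbr' : ∀ (i : Fin (k + m + 1)), i.val ≤ k → pi1 (ω i) ≤ pi1 (χ (Fin.last k)) := by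
    intro i h
    rw [hcl i h]
    exact hχbr _
  have hups : ω ∈ Upsilon d (k + m) := by
    refine ⟨⟨?_, ?_⟩, ?_, ?_⟩
    · intro i
      by_cases hik : i.val + 1 ≤ k
      · have e1 : ω i.succ = χ ⟨i.val + 1, by omega⟩ := hcl i.succ (by simpa using hik)
        have e2 : ω i.castSucc = χ ⟨i.val, by omega⟩ := hcl i.castSucc (by simp; omega)
        rw [e1, e2]
        exact saw_step hχsaw i.val (by omega)
      · have hik' : k ≤ i.val := by omega
        have e1 : ω i.succ = χ (Fin.last k) + ω' ⟨i.succ.val - k, by have := i.succ.isLt; omega⟩ :=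
          hcg i.succ (by simp; omega)
        have e2 : ω i.castSucc = χ (Fin.last k) + ω' ⟨i.castSucc.val - k, by have := i.castSucc.isLt; omega⟩ :=
          hcg i.castSucc (by simpa using hik')
        rw [e1, e2]
        simp only [Pi.add_apply, add_sub_add_left_eq_sub]
        have ea : (⟨i.succ.val - k, by have := i.succ.isLt; omega⟩ : Fin (m + 1))
            = ⟨(i.val - k) + 1, by have := i.isLt; omega⟩ := by
          apply Fin.ext; show i.succ.val - k = (i.val - k) + 1
          simp only [Fin.val_succ]; omega
        have eb : (⟨i.castSucc.val - k, by have := i.castSucc.isLt; omega⟩ : Fin (m + 1))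
            = ⟨i.val - k, by have := i.isLt; omega⟩ := by
          apply Fin.ext; show i.castSucc.val - k = i.val - k
          simp only [Fin.coe_castSucc]
        rw [ea, eb]
        exact saw_step hωsaw (i.val - k) (by have := i.isLt; omega)
    · intro a b hab
      by_cases ha : a.val ≤ k <;> by_cases hb2 : b.val ≤ k
      · rw [hcl a ha, hcl b hb2] at hab
        have h3 := hχsaw.2 hab
        rw [Fin.mk.injEq] at h3
        exact Fin.ext h3
      · exfalso
        have h1 : pi1 (ω a) ≤ pi1 (χ (Fin.last k)) := hbr' a ha
        have h2 : pi1 (χ (Fin.last k)) < pi1 (ω b) := hpos2 b (by omega)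
        rw [hab] at h1; linarith
      · exfalso
        have h1 : pi1 (ω b) ≤ pi1 (χ (Fin.last k)) := hbr' b hb2
        have h2 : pi1 (χ (Fin.last k)) < pi1 (ω a) := hpos2 a (by omega)
        rw [hab] at h2; linarith
      · rw [hcg a (by omega), hcg b (by omega)] at hab
        have h2 := add_left_cancel hab
        have h3 := hωsaw.2 h2
        rw [Fin.mk.injEq] at h3
        exact Fin.ext (by omega)
    · have e0 : ω 0 = χ ⟨(0 : Fin (k + m + 1)).val, by simp only [Fin.val_zero]; omega⟩ := hcl 0 (by simp)
      rw [e0]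
      have e1 : (⟨(0 : Fin (k + m + 1)).val, by simp only [Fin.val_zero]; omega⟩ : Fin (k + 1)) = 0 := by
        apply Fin.ext; simp
      rw [e1, hχ0]
    · intro j hj
      by_cases hjk : j.val ≤ k
      · rw [hcl j hjk]
        exact hχpos _ hj
      · have := hpos2 j (by omega)
        linarith
  have hKeq : ∀ (pf : k < k + m + 1), pi1 (ω ⟨k, pf⟩) = pi1 (χ (Fin.last k)) := by
    intro pf
    rw [hcl ⟨k, pf⟩ (le_refl k)]
    rfl
  refine ⟨hups, ⟨hk, ?_⟩, ?_⟩
  · have hlt : k < k + m := by omega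
    refine ⟨hlt, fun a c ha hc => ?_⟩
    constructor
    · rw [hKeq]
      exact hbr' a ha
    · rw [hKeq]
      exact hpos2 c hc
  · intro j hjk hren
    obtain ⟨hj1, hjn, hp⟩ := hren
    apply hχirr j
    have hjklt : j < k := hjk
    refine ⟨hj1, hjklt, fun a c ha hc => ?_⟩
    have hA := hp ⟨a.val, by have := a.isLt; omega⟩ ⟨c.val, by have := c.isLt; omega⟩ ha hc
    have ea : ω ⟨a.val, by have := a.isLt; omega⟩ = χ a :=
      (hcl _ (by show a.val ≤ k; have := a.isLt; omega)).trans (congrArg χ (Fin.ext rfl))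
    have ec : ω ⟨c.val, by have := c.isLt; omega⟩ = χ c :=
      (hcl _ (by show c.val ≤ k; have := c.isLt; omega)).trans (congrArg χ (Fin.ext rfl))
    have ej : ω ⟨j, Nat.lt_succ_of_lt hjn⟩ = χ ⟨j, Nat.lt_succ_of_lt hjklt⟩ :=
      (hcl _ (by show j ≤ k; omega)).trans (congrArg χ (Fin.ext rfl))
    constructor
    · have h1 := hA.1
      rwa [ea, ej] at h1
    · have h2 := hA.2
      rwa [ec, ej] at h2

lemma decomp_mem {d k m : ℕ} (hd : 0 < d) (hk : 1 ≤ k) (hm : 1 ≤ m)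
    {ω : Fin (k + m + 1) → Fin d → ℤ}
    (hω : ω ∈ Upsilon d (k + m)) (hls : LeastRenewal ω k) :
    IsIrrBridge d k (leftPart ω) ∧ rightPart ω ∈ Upsilon d m ∧
      concatW (leftPart ω) (rightPart ω) = ω := by
  obtain ⟨hsaw, h0, hpos⟩ := hω
  obtain ⟨⟨hk1, hklt, hkp⟩, hmin⟩ := hls
  have hBig : ∀ c : Fin (k + m + 1), k < c.val →
      pi1 (ω ⟨k, Nat.lt_succ_of_lt hklt⟩) < pi1 (ω c) :=
    fun c hc => (hkp 0 c (by simp) hc).2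
  have hSm : ∀ a : Fin (k + m + 1), a.val ≤ k →
      pi1 (ω a) ≤ pi1 (ω ⟨k, Nat.lt_succ_of_lt hklt⟩) :=
    fun a ha => (hkp a (Fin.last (k + m)) ha (by simp only [Fin.val_last]; omega)).1
  have hrp0 : rightPart ω 0 = 0 := by
    show ω ⟨k + (0 : Fin (m + 1)).val, _⟩ - ω ⟨k, by omega⟩ = 0
    have e1 : (⟨k + (0 : Fin (m + 1)).val, by have := (0 : Fin (m+1)).isLt; omega⟩ : Fin (k + m + 1))
        = ⟨k, by omega⟩ := by
      apply Fin.ext; show k + (0 : Fin (m + 1)).val = k; simp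
    rw [e1, sub_self]
  have hleft : IsIrrBridge d k (leftPart ω) := by
    refine ⟨⟨⟨⟨?_, ?_⟩, ?_, ?_⟩, ?_⟩, ?_⟩
    · intro i
      exact saw_step hsaw i.val (by have := i.isLt; omega)
    · intro a b hab
      have h3 := hsaw.2 hab
      rw [Fin.mk.injEq] at h3
      exact Fin.ext h3
    · have e1 : (⟨(0 : Fin (k + 1)).val, by have := (0 : Fin (k+1)).isLt; omega⟩ : Fin (k + m + 1)) = 0 := by
        apply Fin.ext; simp
      show ω ⟨(0 : Fin (k + 1)).val, _⟩ = 0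
      rw [e1, h0]
    · intro j hj
      exact hpos ⟨j.val, by have := j.isLt; omega⟩ hj
    · intro j
      exact hSm ⟨j.val, by have := j.isLt; omega⟩ (by show j.val ≤ k; have := j.isLt; omega)
    · intro j hren
      obtain ⟨hj1, hjk2, hjp⟩ := hren
      have hjn : j < k + m := by omega
      refine hmin j hjk2 ⟨hj1, hjn, fun a c ha hc => ?_⟩
      constructor
      · exact (hjp ⟨a.val, by omega⟩ (Fin.last k) ha (by simp only [Fin.val_last]; omega)).1
      · by_cases hck : c.val ≤ k
        · exact (hjp 0 ⟨c.val, by omega⟩ (by simp) hc).2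
        · have h1 : pi1 (ω ⟨j, Nat.lt_succ_of_lt hjn⟩) < pi1 (ω ⟨k, Nat.lt_succ_of_lt hklt⟩) :=
            (hjp 0 (Fin.last k) (by simp) (by simp only [Fin.val_last]; omega)).2
          have h2 := hBig c (by omega)
          exact lt_trans h1 h2
  have hright : rightPart ω ∈ Upsilon d m := by
    refine ⟨⟨?_, ?_⟩, hrp0, ?_⟩
    · intro i
      simp only [rightPart, Pi.sub_apply, sub_sub_sub_cancel_right]
      exact saw_step hsaw (k + i.val) (by have := i.isLt; omega)
    · intro a b hab
      have h2 : ω ⟨k + a.val, by have := a.isLt; omega⟩ = ω ⟨k + b.val, by have := b.isLt; omega⟩ :=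
        sub_left_inj.mp hab
      have h3 := hsaw.2 h2
      rw [Fin.mk.injEq] at h3
      exact Fin.ext (by omega)
    · intro j hj
      have h1 : pi1 (ω ⟨k, Nat.lt_succ_of_lt hklt⟩) < pi1 (ω ⟨k + j.val, by have := j.isLt; omega⟩) :=
        hBig _ (by show k < k + j.val; omega)
      show 0 < pi1 (ω ⟨k + j.val, _⟩ - ω ⟨k, by omega⟩)
      rw [pi1_sub hd]
      have he : pi1 (ω (⟨k, by omega⟩ : Fin (k + m + 1))) = pi1 (ω ⟨k, Nat.lt_succ_of_lt hklt⟩) := rfl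
      rw [he]
      linarith
  refine ⟨hleft, hright, ?_⟩
  funext i
  by_cases h : i.val ≤ k
  · rw [concatW_le _ _ h]
    rfl
  · push_neg at h
    rw [concatW_ge _ hrp0 (le_of_lt h)]
    show ω ⟨k, _⟩ + (ω ⟨k + (i.val - k), _⟩ - ω ⟨k, _⟩) = ω i
    have e : (⟨k + (i.val - k), by have := i.isLt; omega⟩ : Fin (k + m + 1)) = i := by
      apply Fin.ext; show k + (i.val - k) = i.val; omega
    rw [e]
    abel

theorem concat_bijection_leastRenewal (d : ℕ) (hd : 2 ≤ d)
    (k m : ℕ) (hk : 1 ≤ k) (hm : 1 ≤ m) :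
    Set.BijOn
      (fun p : (Fin (k + 1) → Fin d → ℤ) × (Fin (m + 1) → Fin d → ℤ) =>
        concatW p.1 p.2)
      {p | IsIrrBridge d k p.1 ∧ p.2 ∈ Upsilon d m}
      {ω : Fin (k + m + 1) → Fin d → ℤ | ω ∈ Upsilon d (k + m) ∧ LeastRenewal ω k} ∧
    Set.ncard {ω : Fin (k + m + 1) → Fin d → ℤ | ω ∈ Upsilon d (k + m) ∧ LeastRenewal ω k}
      = lambdaCount d k * upsilonCount d m ∧
    (Set.ncard {ω : Fin (k + m + 1) → Fin d → ℤ |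
          ω ∈ Upsilon d (k + m) ∧ LeastRenewal ω k} : ℝ) / (upsilonCount d (k + m) : ℝ)
      = (lambdaCount d k : ℝ) * (upsilonCount d m : ℝ) / (upsilonCount d (k + m) : ℝ) := by
  have hd0 : 0 < d := by omega
  have hbij : Set.BijOn
      (fun p : (Fin (k + 1) → Fin d → ℤ) × (Fin (m + 1) → Fin d → ℤ) =>
        concatW p.1 p.2)
      {p | IsIrrBridge d k p.1 ∧ p.2 ∈ Upsilon d m}
      {ω : Fin (k + m + 1) → Fin d → ℤ | ω ∈ Upsilon d (k + m) ∧ LeastRenewal ω k} := by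
    refine ⟨?_, ?_, ?_⟩
    · intro p hp
      exact concat_mem hd0 hk hm hp.1 hp.2
    · intro p hp q hq h
      have h' : concatW p.1 p.2 = concatW q.1 q.2 := h
      have hχ : p.1 = q.1 := by
        funext i
        have hh := congrFun h' (⟨i.val, by have := i.isLt; omega⟩ : Fin (k + m + 1))
        rw [concatW_le p.1 p.2 (Nat.lt_succ_iff.mp i.isLt),
          concatW_le q.1 q.2 (Nat.lt_succ_iff.mp i.isLt)] at hh
        exact hh
      obtain ⟨hp1, hp2⟩ := hp
      obtain ⟨hq1, hq2⟩ := hq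
      obtain ⟨hpsaw, hp0, hppos⟩ := hp2
      obtain ⟨hqsaw, hq0, hqpos⟩ := hq2
      have hω : p.2 = q.2 := by
        funext i
        by_cases hi : i.val = 0
        · have e : i = 0 := Fin.ext (by simpa using hi)
          rw [e, hp0, hq0]
        · have hh := congrFun h' (⟨k + i.val, by have := i.isLt; omega⟩ : Fin (k + m + 1))
          rw [concatW_ge p.1 hp0 (Nat.le_add_right k i.val),
            concatW_ge q.1 hq0 (Nat.le_add_right k i.val), hχ] at hh
          have h2 := add_left_cancel hh
          have e : (⟨k + i.val - k, by have := i.isLt; omega⟩ : Fin (m + 1)) = i := by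
            apply Fin.ext; show k + i.val - k = i.val; omega
          rw [e] at h2
          exact h2
      exact Prod.ext hχ hω
    · intro ω hω
      obtain ⟨h1, h2, h3⟩ := decomp_mem hd0 hk hm hω.1 hω.2
      exact ⟨(leftPart ω, rightPart ω), ⟨h1, h2⟩, h3⟩
  have hprod : {p : (Fin (k + 1) → Fin d → ℤ) × (Fin (m + 1) → Fin d → ℤ) |
      IsIrrBridge d k p.1 ∧ p.2 ∈ Upsilon d m}
      = {χ : Fin (k + 1) → Fin d → ℤ | IsIrrBridge d k χ} ×ˢ Upsilon d m := rfl
  have hcard : Set.ncard {ω : Fin (k + m + 1) → Fin d → ℤ |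
      ω ∈ Upsilon d (k + m) ∧ LeastRenewal ω k} = lambdaCount d k * upsilonCount d m := by
    rw [← hbij.image_eq, Set.ncard_image_of_injOn hbij.injOn, hprod]
    rw [← Nat.card_coe_set_eq, Nat.card_congr
      (Equiv.Set.prod {χ : Fin (k + 1) → Fin d → ℤ | IsIrrBridge d k χ} (Upsilon d m)),
      Nat.card_prod, Nat.card_coe_set_eq, Nat.card_coe_set_eq]
    rfl
  refine ⟨hbij, hcard, ?_⟩
  rw [hcard]
  push_cast
  ring
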